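/- Let Ψ be a system of t linear forms whose image has codimension 2, defined by a 2×t matrix M over 𝔽_p all of whose 2×2 minors are nonsingular, and let Φ be defined by a single equation a₁x₁ + ⋯ + a_l x_l = 0 with all aᵢ ≠ 0 and such that a₁ ≠ ±a₂ (after relabelling). Then for all n ≥ 2 there exists f : 𝔽_p^n → [−1,1] with 𝔼_x f(x) = 0, T_Φ(f) = 0, and T_Ψ(f) ≥ 2/(2t)^t. -/

import Mathlib

open Finset

/-- The solutions in `(𝔽_p^n)^t` of the system of equations given by the `r × t`
matrix `M` (acting blockwise). -/
noncomputable def kerSols (p : ℕ) [NeZero p] {r t : ℕ} (n : ℕ)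
    (M : Matrix (Fin r) (Fin t) (ZMod p)) : Finset (Fin t → Fin n → ZMod p) :=
  Finset.univ.filter (fun x => ∀ a, ∀ j, ∑ i, M a i * x i j = 0)

/-- `T_Ψ(f) = 𝔼_{x ∈ ker M} f(x₁) ⋯ f(x_t)` for a system whose image is `ker M`. -/
noncomputable def kerT (p : ℕ) [NeZero p] {r t : ℕ} (n : ℕ)
    (M : Matrix (Fin r) (Fin t) (ZMod p)) (f : (Fin n → ZMod p) → ℂ) : ℂ :=
  (∑ x ∈ kerSols p n M, ∏ i, f (x i)) / ((kerSols p n M).card : ℂ)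

open Complex

section Aux

variable {p : ℕ} [NeZero p]

/-- The standard additive character as a bare function. -/
noncomputable def chi (p : ℕ) [NeZero p] : ZMod p → ℂ := fun z => ZMod.stdAddChar z

lemma chi_add (x y : ZMod p) : chi p (x + y) = chi p x * chi p y :=
  AddChar.map_add_eq_mul _ _ _

lemma chi_zero : chi p 0 = 1 := AddChar.map_zero_eq_one _

lemma chi_eq_one_iff {z : ZMod p} : chi p z = 1 ↔ z = 0 := by
  constructor
  · intro h
    have := ZMod.injective_stdAddChar (N := p)
    exact this (h.trans chi_zero.symm)
  · rintro rfl; exact chi_zero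

lemma chi_norm (z : ZMod p) : ‖chi p z‖ = 1 := by
  simp [chi, ZMod.stdAddChar_apply, Circle.norm_coe]

lemma chi_conj (z : ZMod p) : (starRingEnd ℂ) (chi p z) = chi p (-z) := by
  have h1 : chi p z * chi p (-z) = 1 := by
    rw [← chi_add]; simp [chi_zero]
  have h2 : chi p z * (starRingEnd ℂ) (chi p z) = 1 := by
    rw [Complex.mul_conj]
    norm_cast
    have := chi_norm (p := p) z
    rw [Complex.normSq_eq_norm_sq, this]; norm_num
  have hz : chi p z ≠ 0 := by
    intro h; rw [h] at h1; simp at h1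
  exact mul_left_cancel₀ hz (h2.trans h1.symm)

lemma chi_sum {ι : Type*} (s : Finset ι) (z : ι → ZMod p) :
    chi p (∑ i ∈ s, z i) = ∏ i ∈ s, chi p (z i) := by
  classical
  induction s using Finset.cons_induction with
  | empty => simp [chi_zero]
  | cons i s hi ih => rw [Finset.sum_cons, Finset.prod_cons, chi_add, ih]

/-- Generic vanishing: a multiplicative-against-addition function sums to zero over a
translation-invariant set containing a point where it is not 1. -/
lemma sum_eq_zero_of_translate {V : Type*} [AddCommGroup V]
    (φ : V → ℂ) (hφ : ∀ x y, φ (x + y) = φ x * φ y)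
    (K : Finset V) (x₀ : V) (hmem : ∀ x, x ∈ K ↔ x + x₀ ∈ K)
    (hx₀ : φ x₀ ≠ 1) : ∑ x ∈ K, φ x = 0 := by
  have h1 : ∑ x ∈ K, φ (x + x₀) = ∑ x ∈ K, φ x := by
    refine Finset.sum_equiv (Equiv.addRight x₀) (fun i => by simpa using hmem i) ?_
    intro i _; rfl
  have h2 : ∑ x ∈ K, φ (x + x₀) = (∑ x ∈ K, φ x) * φ x₀ := by
    rw [Finset.sum_mul]; exact Finset.sum_congr rfl fun x _ => hφ x x₀
  have := h1.symm.trans h2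
  have h3 : (∑ x ∈ K, φ x) * (φ x₀ - 1) = 0 := by linear_combination -this
  rcases mul_eq_zero.1 h3 with h | h
  · exact h
  · exact absurd (sub_eq_zero.1 h) hx₀

lemma mem_kerSols {p : ℕ} [NeZero p] {r t n : ℕ} {M : Matrix (Fin r) (Fin t) (ZMod p)}
    {x : Fin t → Fin n → ZMod p} :
    x ∈ kerSols p n M ↔ ∀ a j, ∑ i, M a i * x i j = 0 := by
  simp [kerSols]

lemma kerSols_add {p : ℕ} [NeZero p] {r t n : ℕ} {M : Matrix (Fin r) (Fin t) (ZMod p)}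
    {x y : Fin t → Fin n → ZMod p} (hx : x ∈ kerSols p n M) (hy : y ∈ kerSols p n M) :
    x + y ∈ kerSols p n M := by
  rw [mem_kerSols] at *
  intro a j
  simp only [Pi.add_apply, mul_add, Finset.sum_add_distrib, hx a j, hy a j, add_zero]

lemma kerSols_neg {p : ℕ} [NeZero p] {r t n : ℕ} {M : Matrix (Fin r) (Fin t) (ZMod p)}
    {x : Fin t → Fin n → ZMod p} (hx : x ∈ kerSols p n M) :
    -x ∈ kerSols p n M := by
  rw [mem_kerSols] at *
  intro a j
  simp only [Pi.neg_apply, mul_neg, Finset.sum_neg_distrib, hx a j, neg_zero]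

lemma kerSols_zero {p : ℕ} [NeZero p] {r t n : ℕ} {M : Matrix (Fin r) (Fin t) (ZMod p)} :
    (0 : Fin t → Fin n → ZMod p) ∈ kerSols p n M := by
  rw [mem_kerSols]; intro a j; simp

end Aux

section A2
variable {p : ℕ} [NeZero p]

omit [NeZero p] in
lemma L_add {t n : ℕ} (v x y : Fin t → Fin n → ZMod p) :
    ∑ i, ∑ j, v i j * (x + y) i j
      = (∑ i, ∑ j, v i j * x i j) + ∑ i, ∑ j, v i j * y i j := by
  rw [← Finset.sum_add_distrib]
  refine Finset.sum_congr rfl fun i _ => ?_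
  rw [← Finset.sum_add_distrib]
  exact Finset.sum_congr rfl fun j _ => by simp [mul_add]

lemma kerSum_eq_zero {r t n : ℕ} (M : Matrix (Fin r) (Fin t) (ZMod p))
    (v : Fin t → Fin n → ZMod p) (x₀ : Fin t → Fin n → ZMod p)
    (hx₀ : x₀ ∈ kerSols p n M) (hL : ∑ i, ∑ j, v i j * x₀ i j ≠ 0) :
    ∑ x ∈ kerSols p n M, chi p (∑ i, ∑ j, v i j * x i j) = 0 := by
  have hhom : ∀ x y : Fin t → Fin n → ZMod p,
      chi p (∑ i, ∑ j, v i j * (x + y) i j)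
        = chi p (∑ i, ∑ j, v i j * x i j) * chi p (∑ i, ∑ j, v i j * y i j) := by
    intro x y; rw [L_add, chi_add]
  have hmem : ∀ x : Fin t → Fin n → ZMod p,
      x ∈ kerSols p n M ↔ x + x₀ ∈ kerSols p n M := by
    intro x
    constructor
    · intro hx; exact kerSols_add hx hx₀
    · intro hx
      have := kerSols_add hx (kerSols_neg hx₀)
      simpa using this
  have hne : chi p (∑ i, ∑ j, v i j * x₀ i j) ≠ 1 := by
    rw [Ne, chi_eq_one_iff]; exact hL
  exact sum_eq_zero_of_translate _ hhom (kerSols p n M) x₀ hmem hne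

lemma kerSum_eq_card {r t n : ℕ} (M : Matrix (Fin r) (Fin t) (ZMod p))
    (v : Fin t → Fin n → ZMod p)
    (h : ∀ x ∈ kerSols p n M, ∑ i, ∑ j, v i j * x i j = 0) :
    ∑ x ∈ kerSols p n M, chi p (∑ i, ∑ j, v i j * x i j) = (kerSols p n M).card := by
  rw [Finset.sum_congr rfl fun x hx => by rw [h x hx, chi_zero]]
  simp

lemma kerSum_re_nonneg {r t n : ℕ} (M : Matrix (Fin r) (Fin t) (ZMod p))
    (v : Fin t → Fin n → ZMod p) :
    0 ≤ (∑ x ∈ kerSols p n M, chi p (∑ i, ∑ j, v i j * x i j)).re := by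
  by_cases hc : ∃ x₀ ∈ kerSols p n M, ∑ i, ∑ j, v i j * x₀ i j ≠ 0
  · obtain ⟨x₀, h1, h2⟩ := hc
    rw [kerSum_eq_zero M v x₀ h1 h2]; simp
  · push_neg at hc
    rw [kerSum_eq_card M v hc]
    simp

lemma univSum_eq_zero {n : ℕ} (v : Fin n → ZMod p) (hv : v ≠ 0) :
    ∑ x : Fin n → ZMod p, chi p (∑ j, v j * x j) = 0 := by
  obtain ⟨j₀, hj₀⟩ := Function.ne_iff.1 hv
  have hhom : ∀ x y : Fin n → ZMod p,
      chi p (∑ j, v j * (x + y) j) = chi p (∑ j, v j * x j) * chi p (∑ j, v j * y j) := by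
    intro x y
    rw [← chi_add]
    congr 1
    rw [← Finset.sum_add_distrib]
    exact Finset.sum_congr rfl fun j _ => by simp [mul_add]
  have hne : chi p (∑ j, v j * (Pi.single j₀ 1 : Fin n → ZMod p) j) ≠ 1 := by
    rw [Ne, chi_eq_one_iff]
    have h1 : ∑ j, v j * (Pi.single j₀ 1 : Fin n → ZMod p) j = v j₀ := by
      rw [Finset.sum_eq_single j₀]
      · simp
      · intro b _ hb; rw [Pi.single_eq_of_ne hb, mul_zero]
      · intro h; exact absurd (Finset.mem_univ _) h
    rw [h1]
    simpa using hj₀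
  exact sum_eq_zero_of_translate _ hhom Finset.univ (Pi.single j₀ 1) (fun x => by simp) hne
end A2

section A3
variable {p : ℕ} [NeZero p]

lemma dot_single (n : ℕ) (v : Fin n → ZMod p) (jc : Fin n) :
    ∑ j, v j * (Pi.single jc 1 : Fin n → ZMod p) j = v jc := by
  rw [Finset.sum_eq_single jc]
  · simp
  · intro b _ hb; rw [Pi.single_eq_of_ne hb, mul_zero]
  · intro h; exact absurd (Finset.mem_univ _) h

omit [NeZero p] in
lemma sum_coeff_two {l : ℕ} (i₀ j₀ : Fin l) (hij : i₀ ≠ j₀) (A B : ZMod p)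
    (P : Fin l → ZMod p) :
    ∑ i, P i * ((if i = i₀ then A else 0) + (if i = j₀ then B else 0))
      = P i₀ * A + P j₀ * B := by
  have h : ∀ i, P i * ((if i = i₀ then A else 0) + (if i = j₀ then B else 0))
      = (if i = i₀ then P i * A else 0) + (if i = j₀ then P i * B else 0) := by
    intro i; split_ifs <;> ring
  rw [Finset.sum_congr rfl fun i _ => h i, Finset.sum_add_distrib,
    Finset.sum_ite_eq' Finset.univ i₀ (fun i => P i * A),
    Finset.sum_ite_eq' Finset.univ j₀ (fun i => P i * B)]
  simp

lemma ker_expand {r t' n tt : ℕ} (M' : Matrix (Fin r) (Fin t') (ZMod p))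
    (w : Fin tt × Bool → Fin n → ZMod p) (c0 : ℝ) :
    ∑ x ∈ kerSols p n M', ∏ i, ((c0:ℂ) * ∑ c : Fin tt × Bool, chi p (∑ j, w c j * x i j))
      = (c0:ℂ)^t' * ∑ g : Fin t' → Fin tt × Bool,
          ∑ x ∈ kerSols p n M', chi p (∑ i, ∑ j, w (g i) j * x i j) := by
  have key : ∀ x : Fin t' → Fin n → ZMod p,
      ∏ i, ((c0:ℂ) * ∑ c : Fin tt × Bool, chi p (∑ j, w c j * x i j))
        = (c0:ℂ)^t' * ∑ g : Fin t' → Fin tt × Bool, chi p (∑ i, ∑ j, w (g i) j * x i j) := by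
    intro x
    rw [Finset.prod_mul_distrib, Finset.prod_const, Finset.card_univ, Fintype.card_fin]
    congr 1
    rw [Finset.prod_univ_sum, Fintype.piFinset_univ]
    exact Finset.sum_congr rfl fun g _ => (chi_sum Finset.univ _).symm
  rw [Finset.sum_congr rfl fun x _ => key x, ← Finset.mul_sum, Finset.sum_comm]

end A3

set_option maxHeartbeats 2000000 in
/-- Proposition 3.1: if `Ψ` is a linearly generic codimension-2 system in `t` variables
and `Φ` is a single equation `∑ a_i x_i = 0` with all `a_i ≠ 0` and some `a_i ≠ ±a_j`,
then for all `n ≥ 2` there is `f : 𝔽_p^n → [−1,1]` with mean zero, `T_Φ(f) = 0` and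
`T_Ψ(f) ≥ 2/(2t)^t`. -/
theorem not_weakly_sidorenko_generic_case (p : ℕ) [Fact p.Prime] (t l : ℕ)
    (ht : 2 ≤ t) (hl : 2 ≤ l)
    (M : Matrix (Fin 2) (Fin t) (ZMod p))
    (hM : ∀ i j : Fin t, i ≠ j → M 0 i * M 1 j - M 0 j * M 1 i ≠ 0)
    (a : Fin l → ZMod p) (ha : ∀ i, a i ≠ 0)
    (hab : ∃ i j : Fin l, i ≠ j ∧ a i ≠ a j ∧ a i ≠ -a j)
    (n : ℕ) (hn : 2 ≤ n) :
    ∃ f : (Fin n → ZMod p) → ℝ,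
      (∀ x, f x ∈ Set.Icc (-1 : ℝ) 1) ∧ (∑ x : Fin n → ZMod p, f x = 0) ∧
      kerT p n (Matrix.of fun (_ : Fin 1) i => a i) (fun x => (f x : ℂ)) = 0 ∧
      (2 / (2 * (t : ℝ)) ^ t) ≤ (kerT p n M (fun x => (f x : ℂ))).re := by
  haveI : NeZero n := ⟨by omega⟩
  obtain ⟨i₀, j₀, hij, hab1, hab2⟩ := hab
  have ht0 : (0:ℕ) < t := by omega
  have ht1 : (1:ℕ) < t := by omega
  -- Fin n facts
  have h01 : (0 : Fin n) ≠ 1 := by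
    intro h
    have h2 := congrArg Fin.val h
    simp only [Fin.val_zero, Fin.val_one'] at h2
    rw [Nat.mod_eq_of_lt (by omega)] at h2
    omega
  have h10 : (1 : Fin n) ≠ 0 := Ne.symm h01
  -- frequencies
  set u : Fin t → Fin n → ZMod p :=
    fun k j => if j = 0 then M 0 k else if j = 1 then M 1 k else 0 with hu_def
  have hu0 : ∀ k, u k 0 = M 0 k := fun k => by simp [hu_def]
  have hu1 : ∀ k, u k 1 = M 1 k := fun k => by simp [hu_def, h10]
  have hcolM : ∀ k, ¬(M 0 k = 0 ∧ M 1 k = 0) := by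
    intro k hk
    set m : Fin t := if k = ⟨0, ht0⟩ then ⟨1, ht1⟩ else ⟨0, ht0⟩ with hm_def
    have hmk : k ≠ m := by
      rcases eq_or_ne k ⟨0, ht0⟩ with h | h
      · rw [hm_def, if_pos h, h]
        intro hc
        exact absurd (congrArg Fin.val hc) (by norm_num)
      · rw [hm_def, if_neg h]; exact h
    have := hM k m hmk
    rw [hk.1, hk.2] at this
    simp at this
  have hu_ne : ∀ k, u k ≠ 0 := by
    intro k hk
    refine hcolM k ⟨?_, ?_⟩
    · rw [← hu0 k, hk]; rfl
    · rw [← hu1 k, hk]; rfl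
  set s : Bool → ZMod p := fun b => if b then 1 else -1 with hs_def
  have hs_ne : ∀ b, s b ≠ 0 := by
    intro b; cases b <;> simp [hs_def]
  have hs_not : ∀ b, s (!b) = - s b := by
    intro b; cases b <;> simp [hs_def]
  set w : Fin t × Bool → Fin n → ZMod p := fun c => s c.2 • u c.1 with hw_def
  have hw_ne : ∀ c, w c ≠ 0 := fun c => smul_ne_zero (hs_ne c.2) (hu_ne c.1)
  set c0 : ℝ := (2 * (t:ℝ))⁻¹ with hc0_def
  have htR : (0:ℝ) < t := by exact_mod_cast ht0
  set F : (Fin n → ZMod p) → ℂ :=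
    fun x => (c0:ℂ) * ∑ c : Fin t × Bool, chi p (∑ j, w c j * x j) with hF_def
  set f : (Fin n → ZMod p) → ℝ := fun x => (F x).re with hf_def
  have hFconj : ∀ x, (starRingEnd ℂ) (F x) = F x := by
    intro x
    simp only [hF_def, map_mul, map_sum, Complex.conj_ofReal]
    congr 1
    have step : ∀ c : Fin t × Bool, (starRingEnd ℂ) (chi p (∑ j, w c j * x j))
        = chi p (∑ j, w (c.1, !c.2) j * x j) := by
      intro c
      rw [chi_conj]
      congr 1
      rw [← Finset.sum_neg_distrib]
      refine Finset.sum_congr rfl fun j _ => ?_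
      simp only [hw_def, Pi.smul_apply, smul_eq_mul, hs_not]
      ring
    rw [Finset.sum_congr rfl fun c _ => step c]
    rw [Fintype.sum_prod_type, Fintype.sum_prod_type]
    refine Finset.sum_congr rfl fun k _ => ?_
    rw [Fintype.sum_bool, Fintype.sum_bool]
    simp only [Bool.not_true, Bool.not_false]
    exact add_comm _ _
  have hFreal : ∀ x, ((f x : ℝ) : ℂ) = F x := fun x => Complex.conj_eq_iff_re.mp (hFconj x)
  have hc0_nonneg : 0 ≤ c0 := by rw [hc0_def]; positivity
  have hFnorm : ∀ x, ‖F x‖ ≤ 1 := by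
    intro x
    have h1 : ‖∑ c : Fin t × Bool, chi p (∑ j, w c j * x j)‖ ≤ (2*(t:ℝ)) := by
      calc ‖∑ c : Fin t × Bool, chi p (∑ j, w c j * x j)‖
          ≤ ∑ c : Fin t × Bool, ‖chi p (∑ j, w c j * x j)‖ := by
            exact norm_sum_le Finset.univ (fun c => chi p (∑ j, w c j * x j))
        _ = ∑ _c : Fin t × Bool, (1:ℝ) := by
            refine Finset.sum_congr rfl fun c _ => ?_
            simpa using chi_norm (∑ j, w c j * x j)
        _ = 2*(t:ℝ) := by
            rw [Finset.sum_const, Finset.card_univ, Fintype.card_prod, Fintype.card_fin,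
              Fintype.card_bool]
            push_cast; ring
    calc ‖F x‖
        = c0 * ‖∑ c : Fin t × Bool, chi p (∑ j, w c j * x j)‖ := by
          simp only [hF_def, norm_mul, Complex.norm_real, Real.norm_eq_abs, _root_.abs_of_nonneg hc0_nonneg]
      _ ≤ c0 * (2*(t:ℝ)) := mul_le_mul_of_nonneg_left h1 hc0_nonneg
      _ = 1 := by rw [hc0_def]; field_simp
  have hIcc : ∀ x, f x ∈ Set.Icc (-1:ℝ) 1 := by
    intro x
    rw [Set.mem_Icc, ← abs_le]
    calc |f x| = |(F x).re| := rfl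
      _ ≤ ‖F x‖ := Complex.abs_re_le_norm _
      _ ≤ 1 := hFnorm x
  have hmean : ∑ x : Fin n → ZMod p, f x = 0 := by
    have hFm : ∑ x : Fin n → ZMod p, F x = 0 := by
      simp only [hF_def]
      rw [← Finset.mul_sum, Finset.sum_comm]
      rw [Finset.sum_congr rfl fun c (_ : c ∈ (Finset.univ : Finset (Fin t × Bool))) =>
        univSum_eq_zero (w c) (hw_ne c)]
      simp
    have : ∑ x : Fin n → ZMod p, f x = (∑ x : Fin n → ZMod p, F x).re := by
      simp only [hf_def]
      exact (Complex.re_sum _ _).symm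
    rw [this, hFm]
    rfl
  -- Φ part
  have hPhiInner : ∀ g : Fin l → Fin t × Bool,
      ∑ x ∈ kerSols p n (Matrix.of fun (_ : Fin 1) i => a i),
        chi p (∑ i, ∑ j, w (g i) j * x i j) = 0 := by
    intro g
    have hd_ne : (a j₀ • w (g i₀) - a i₀ • w (g j₀) : Fin n → ZMod p) ≠ 0 := by
      intro hd0
      have hd' : (a j₀ * s (g i₀).2) • u (g i₀).1 - (a i₀ * s (g j₀).2) • u (g j₀).1
          = (0 : Fin n → ZMod p) := by
        rw [← hd0]
        simp only [hw_def]
        rw [smul_smul, smul_smul]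
      have hc1 : a j₀ * s (g i₀).2 ≠ 0 := mul_ne_zero (ha j₀) (hs_ne _)
      rcases eq_or_ne (g i₀).1 (g j₀).1 with hk | hk
      · rw [hk, ← sub_smul] at hd'
        rcases smul_eq_zero.mp hd' with h | h
        · have hcc : a j₀ * s (g i₀).2 = a i₀ * s (g j₀).2 := sub_eq_zero.mp h
          rcases Bool.eq_false_or_eq_true (g i₀).2 with hb1 | hb1 <;>
            rcases Bool.eq_false_or_eq_true (g j₀).2 with hb2 | hb2 <;>
            rw [hb1, hb2] at hcc <;>
            simp only [hs_def, if_true, if_false, Bool.false_eq_true, mul_one, mul_neg_one,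
              neg_inj, mul_neg] at hcc <;>
            first
              | exact hab1 (by linear_combination hcc)
              | exact hab1 (by linear_combination -hcc)
              | exact hab2 (by linear_combination hcc)
              | exact hab2 (by linear_combination -hcc)
        · exact hu_ne _ h
      · apply hM (g i₀).1 (g j₀).1 hk
        have h0 := congrFun hd' 0
        have h1 := congrFun hd' 1
        simp only [Pi.sub_apply, Pi.smul_apply, smul_eq_mul, Pi.zero_apply, hu0, hu1] at h0 h1
        have key : (a j₀ * s (g i₀).2) *
            (M 0 (g i₀).1 * M 1 (g j₀).1 - M 0 (g j₀).1 * M 1 (g i₀).1) = 0 := by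
          linear_combination M 1 (g j₀).1 * h0 - M 0 (g j₀).1 * h1
        rcases mul_eq_zero.mp key with h | h
        · exact absurd h hc1
        · exact h
    obtain ⟨jc, hjc⟩ := Function.ne_iff.1 hd_ne
    have hjc' : a j₀ * w (g i₀) jc - a i₀ * w (g j₀) jc ≠ 0 := by
      simpa [Pi.sub_apply, Pi.smul_apply, smul_eq_mul] using hjc
    set e : Fin n → ZMod p := Pi.single jc 1 with he_def
    set coeff : Fin l → ZMod p :=
      fun i => (if i = i₀ then a j₀ else 0) + (if i = j₀ then -a i₀ else 0) with hco_def
    set x₀ : Fin l → Fin n → ZMod p := fun i => coeff i • e with hx₀_def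
    have hco : ∀ P : Fin l → ZMod p, ∑ i, P i * coeff i = P i₀ * a j₀ + P j₀ * (-a i₀) := by
      intro P
      simp only [hco_def]
      exact sum_coeff_two i₀ j₀ hij (a j₀) (-a i₀) P
    have hx₀mem : x₀ ∈ kerSols p n (Matrix.of fun (_ : Fin 1) i => a i) := by
      rw [mem_kerSols]
      intro α j'
      have hstep : ∀ i, (Matrix.of fun (_ : Fin 1) i => a i) α i * x₀ i j'
          = (a i * e j') * coeff i := by
        intro i
        simp only [hx₀_def, Matrix.of_apply, Pi.smul_apply, smul_eq_mul]
        ring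
      rw [Finset.sum_congr rfl fun i _ => hstep i, hco (fun i => a i * e j')]
      ring
    refine kerSum_eq_zero _ _ x₀ hx₀mem ?_
    have hL : ∀ i, ∑ j, w (g i) j * x₀ i j = (∑ j, w (g i) j * e j) * coeff i := by
      intro i
      rw [Finset.sum_mul]
      refine Finset.sum_congr rfl fun j _ => ?_
      simp only [hx₀_def, Pi.smul_apply, smul_eq_mul]
      ring
    rw [Finset.sum_congr rfl fun i _ => hL i, hco (fun i => ∑ j, w (g i) j * e j),
      he_def, dot_single, dot_single]
    intro hcon
    apply hjc'
    linear_combination hcon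
  have hPhi : kerT p n (Matrix.of fun (_ : Fin 1) i => a i) (fun x => ((f x : ℝ) : ℂ)) = 0 := by
    unfold kerT
    have h1 : ∑ x ∈ kerSols p n (Matrix.of fun (_ : Fin 1) i => a i), ∏ i, ((f (x i) : ℝ) : ℂ)
        = (c0:ℂ)^l * ∑ g : Fin l → Fin t × Bool,
            ∑ x ∈ kerSols p n (Matrix.of fun (_ : Fin 1) i => a i),
              chi p (∑ i, ∑ j, w (g i) j * x i j) := by
      rw [Finset.sum_congr rfl fun x _ => Finset.prod_congr rfl fun i _ => hFreal (x i)]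
      simp only [hF_def]
      exact ker_expand _ w c0
    rw [h1, Finset.sum_congr rfl fun g _ => hPhiInner g]
    simp
  -- Ψ part
  have hcard_pos : 0 < (kerSols p n M).card := Finset.card_pos.mpr ⟨0, kerSols_zero⟩
  have hPsi : (2 / (2 * (t : ℝ)) ^ t) ≤ (kerT p n M (fun x => ((f x : ℝ) : ℂ))).re := by
    unfold kerT
    have h1 : ∑ x ∈ kerSols p n M, ∏ i, ((f (x i) : ℝ) : ℂ)
        = (c0:ℂ)^t * ∑ g : Fin t → Fin t × Bool,
            ∑ x ∈ kerSols p n M, chi p (∑ i, ∑ j, w (g i) j * x i j) := by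
      rw [Finset.sum_congr rfl fun x _ => Finset.prod_congr rfl fun i _ => hFreal (x i)]
      simp only [hF_def]
      exact ker_expand _ w c0
    have hplus : ∀ b : Bool, ∀ x ∈ kerSols p n M,
        (∑ i, ∑ j, w ((fun k : Fin t => (k, b)) i) j * x i j) = 0 := by
      intro b x hx
      rw [mem_kerSols] at hx
      rw [Finset.sum_comm]
      refine Finset.sum_eq_zero fun j _ => ?_
      have hterm : ∀ k : Fin t, w (k, b) j * x k j = s b * (u k j * x k j) := by
        intro k
        simp only [hw_def, Pi.smul_apply, smul_eq_mul]
        ring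
      rw [Finset.sum_congr rfl fun k _ => hterm k, ← Finset.mul_sum]
      rcases eq_or_ne j 0 with rfl | hj0
      · rw [Finset.sum_congr rfl fun k (_ : k ∈ Finset.univ) => by rw [hu0 k], hx 0 0, mul_zero]
      rcases eq_or_ne j 1 with rfl | hj1
      · rw [Finset.sum_congr rfl fun k (_ : k ∈ Finset.univ) => by rw [hu1 k], hx 1 1, mul_zero]
      · have hz : ∀ k : Fin t, u k j * x k j = 0 := by
          intro k
          simp [hu_def, hj0, hj1]
        rw [Finset.sum_congr rfl fun k _ => hz k]
        simp
    set G : (Fin t → Fin t × Bool) → ℂ :=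
      fun g => ∑ x ∈ kerSols p n M, chi p (∑ i, ∑ j, w (g i) j * x i j) with hG_def
    have hGre : ∀ g, 0 ≤ (G g).re := fun g => kerSum_re_nonneg M _
    have hgne : (fun k : Fin t => (k, true)) ≠ (fun k : Fin t => (k, false)) := by
      intro hfun
      have := congrFun hfun ⟨0, ht0⟩
      simp at this
    have hsum_re : 2 * ((kerSols p n M).card : ℝ) ≤ (∑ g : Fin t → Fin t × Bool, G g).re := by
      rw [Complex.re_sum]
      have e1 : G (fun k : Fin t => (k, true)) = ((kerSols p n M).card : ℂ) :=
        kerSum_eq_card M _ (hplus true)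
      have e2 : G (fun k : Fin t => (k, false)) = ((kerSols p n M).card : ℂ) :=
        kerSum_eq_card M _ (hplus false)
      have hpair : ∑ g ∈ ({(fun k : Fin t => (k, true)), (fun k : Fin t => (k, false))} :
          Finset (Fin t → Fin t × Bool)), (G g).re = 2 * ((kerSols p n M).card : ℝ) := by
        rw [Finset.sum_pair hgne, e1, e2]
        simp
        ring
      rw [← hpair]
      exact Finset.sum_le_sum_of_subset_of_nonneg (Finset.subset_univ _) (fun g _ _ => hGre g)
    rw [h1]
    have hcR : (0:ℝ) < ((kerSols p n M).card : ℝ) := by exact_mod_cast hcard_pos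
    have hre : (((c0:ℂ)^t * ∑ g : Fin t → Fin t × Bool, G g) / ((kerSols p n M).card : ℂ)).re
        = (c0^t / ((kerSols p n M).card : ℝ)) * (∑ g : Fin t → Fin t × Bool, G g).re := by
      have hcast : ((c0:ℂ)^t * ∑ g : Fin t → Fin t × Bool, G g) / ((kerSols p n M).card : ℂ)
          = ((c0^t / ((kerSols p n M).card : ℝ) : ℝ) : ℂ) * ∑ g : Fin t → Fin t × Bool, G g := by
        push_cast
        ring
      rw [hcast, Complex.re_ofReal_mul]
    rw [hre]
    have h2t : (0:ℝ) < 2 * (t:ℝ) := by linarith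
    calc 2 / (2 * (t:ℝ)) ^ t
        = (c0^t / ((kerSols p n M).card : ℝ)) * (2 * ((kerSols p n M).card : ℝ)) := by
          rw [hc0_def, inv_pow]
          rw [eq_comm, div_mul_eq_mul_div, div_eq_iff hcR.ne']
          ring
      _ ≤ (c0^t / ((kerSols p n M).card : ℝ)) * (∑ g : Fin t → Fin t × Bool, G g).re := by
          refine mul_le_mul_of_nonneg_left hsum_re ?_
          exact div_nonneg (pow_nonneg hc0_nonneg _) hcR.le
  exact ⟨f, hIcc, hmean, hPhi, hPsi⟩
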